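/- Define for β > β_c and x = (x1,x2) ∈ R^2 \ {0} the surface tension τ_β(x) = x1·arcsinh(s x1) + x2·arcsinh(s x2), where s > 0 is the unique solution of sqrt(1+s^2 x1^2) + sqrt(1+s^2 x2^2) = sinh(2β) + 1/sinh(2β). Then lim_{β ↓ β_c} τ_β(x)/(β − β_c) = 4|x|, where |x| is the Euclidean norm. -/

import Mathlib

open Filter Real

/-- The critical inverse temperature of the 2d Ising model: `sinh (2 β_c) = 1`. -/
noncomputable def betaC : ℝ := Real.arsinh 1 / 2

lemma sinh_two_betaC : Real.sinh (2 * betaC) = 1 := by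
  have h : 2 * betaC = Real.arsinh 1 := by unfold betaC; ring
  rw [h, Real.sinh_arsinh]

lemma cosh_two_betaC : Real.cosh (2 * betaC) = Real.sqrt 2 := by
  have h1 : Real.cosh (2 * betaC) ^ 2 = 2 := by
    rw [Real.cosh_sq, sinh_two_betaC]; norm_num
  have h2 : (0:ℝ) ≤ Real.cosh (2 * betaC) := (Real.cosh_pos _).le
  conv_rhs => rw [← h1]
  rw [Real.sqrt_sq h2]

lemma sqrt_one_add_sub_one (u : ℝ) (hu : 0 ≤ u) :
    Real.sqrt (1 + u) - 1 = u / (Real.sqrt (1 + u) + 1) := by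
  have h1 : (0:ℝ) ≤ 1 + u := by linarith
  have h2 := Real.sq_sqrt h1
  have h3 : 0 < Real.sqrt (1 + u) + 1 := by positivity
  rw [eq_div_iff h3.ne']
  nlinarith [h2]

lemma arsinh_slope : Tendsto (fun y => Real.arsinh y / y) (nhdsWithin 0 {(0:ℝ)}ᶜ) (nhds 1) := by
  have h := (Real.hasDerivAt_arsinh 0)
  rw [hasDerivAt_iff_tendsto_slope] at h
  have h' : ((Real.sqrt (1 + (0:ℝ) ^ 2))⁻¹ : ℝ) = 1 := by norm_num
  rw [h'] at h
  refine h.congr (fun y => ?_)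
  rw [slope_def_field]
  simp

lemma slope_sq_identity (t b : ℝ) (ht : 0 < t) (hb : b ≠ 0) :
    (t - 1) / b * ((t - 1) / b) / t = (t + 1 / t - 2) / b ^ 2 := by
  field_simp
  ring

lemma aux_cancel (a s b : ℝ) (hs : s ≠ 0) : a / s * (s / b) = a / b := by
  rw [div_mul_div_comm, mul_comm a s, mul_div_mul_left _ _ hs]

set_option maxHeartbeats 1000000 in
/-- The McCoy–Wu surface tension near criticality: if for each `β > β_c`, `s β > 0`
solves `√(1+s²x₁²)+√(1+s²x₂²) = sinh(2β) + 1/sinh(2β)`, then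
`τ_β(x) = x₁ arsinh(s x₁) + x₂ arsinh(s x₂)` satisfies
`τ_β(x)/(β−β_c) → 4|x|` as `β ↓ β_c`. -/
theorem surface_tension_near_criticality (x1 x2 : ℝ) (hx : ¬(x1 = 0 ∧ x2 = 0))
    (s : ℝ → ℝ)
    (hs : ∀ β, betaC < β → 0 < s β ∧
      Real.sqrt (1 + (s β) ^ 2 * x1 ^ 2) + Real.sqrt (1 + (s β) ^ 2 * x2 ^ 2)
        = Real.sinh (2 * β) + 1 / Real.sinh (2 * β)) :
    Tendsto
      (fun β => (x1 * Real.arsinh (s β * x1) + x2 * Real.arsinh (s β * x2)) / (β - betaC))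
      (nhdsWithin betaC (Set.Ioi betaC))
      (nhds (4 * Real.sqrt (x1 ^ 2 + x2 ^ 2))) := by
  set l := nhdsWithin betaC (Set.Ioi betaC) with hl
  have hn2 : (0:ℝ) < x1 ^ 2 + x2 ^ 2 := by
    rcases not_and_or.mp hx with h | h
    · have : 0 < x1 ^ 2 := by positivity
      nlinarith [sq_nonneg x2]
    · have : 0 < x2 ^ 2 := by positivity
      nlinarith [sq_nonneg x1]
  set n := Real.sqrt (x1 ^ 2 + x2 ^ 2) with hn
  have hnpos : 0 < n := Real.sqrt_pos.mpr hn2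
  have hnsq : n ^ 2 = x1 ^ 2 + x2 ^ 2 := Real.sq_sqrt hn2.le
  -- basic facts on the filter
  have hmem : ∀ᶠ β in l, betaC < β := eventually_mem_nhdsWithin
  -- sinh (2β) > 1 for β > betaC
  have ht1 : ∀ β, betaC < β → 1 < Real.sinh (2 * β) := by
    intro β hβ
    rw [← sinh_two_betaC]
    exact Real.sinh_lt_sinh.mpr (by linarith)
  -- Step 1 : s → 0
  have hsup : ∀ β, betaC < β → (s β) ^ 2 ≤
      2 * ((Real.sinh (2 * β) + 1 / Real.sinh (2 * β) - 1) ^ 2 - 1) / (x1 ^ 2 + x2 ^ 2) := by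
    intro β hβ
    obtain ⟨hsp, heq⟩ := hs β hβ
    set f := Real.sinh (2 * β) + 1 / Real.sinh (2 * β) with hf
    have hA1 : (1:ℝ) ≤ Real.sqrt (1 + (s β) ^ 2 * x1 ^ 2) :=
      Real.one_le_sqrt.mpr (by nlinarith [sq_nonneg (s β * x1)])
    have hB1 : (1:ℝ) ≤ Real.sqrt (1 + (s β) ^ 2 * x2 ^ 2) :=
      Real.one_le_sqrt.mpr (by nlinarith [sq_nonneg (s β * x2)])
    have hAsq : Real.sqrt (1 + (s β) ^ 2 * x1 ^ 2) ^ 2 = 1 + (s β) ^ 2 * x1 ^ 2 :=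
      Real.sq_sqrt (by nlinarith [sq_nonneg (s β * x1)])
    have hBsq : Real.sqrt (1 + (s β) ^ 2 * x2 ^ 2) ^ 2 = 1 + (s β) ^ 2 * x2 ^ 2 :=
      Real.sq_sqrt (by nlinarith [sq_nonneg (s β * x2)])
    have hAle : Real.sqrt (1 + (s β) ^ 2 * x1 ^ 2) ≤ f - 1 := by linarith
    have hBle : Real.sqrt (1 + (s β) ^ 2 * x2 ^ 2) ≤ f - 1 := by linarith
    have e1 : (s β) ^ 2 * x1 ^ 2 ≤ (f - 1) ^ 2 - 1 := by nlinarith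
    have e2 : (s β) ^ 2 * x2 ^ 2 ≤ (f - 1) ^ 2 - 1 := by nlinarith
    rw [le_div_iff₀ hn2]
    nlinarith
  have hV : Tendsto (fun β => 2 * ((Real.sinh (2 * β) + 1 / Real.sinh (2 * β) - 1) ^ 2 - 1)
      / (x1 ^ 2 + x2 ^ 2)) l (nhds 0) := by
    have hc : ContinuousAt (fun β => 2 * ((Real.sinh (2 * β) + 1 / Real.sinh (2 * β) - 1) ^ 2 - 1)
        / (x1 ^ 2 + x2 ^ 2)) betaC := by
      have h0 : Real.sinh (2 * betaC) ≠ 0 := by rw [sinh_two_betaC]; norm_num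
      fun_prop (disch := intros; first | exact h0 | positivity)
    have hval : 2 * ((Real.sinh (2 * betaC) + 1 / Real.sinh (2 * betaC) - 1) ^ 2 - 1)
        / (x1 ^ 2 + x2 ^ 2) = 0 := by
      rw [sinh_two_betaC]; norm_num
    have h2 := hc.continuousWithinAt (s := Set.Ioi betaC)
    rw [ContinuousWithinAt] at h2
    rw [hval] at h2
    exact h2
  have hsq0 : Tendsto (fun β => (s β) ^ 2) l (nhds 0) := by
    refine tendsto_of_tendsto_of_tendsto_of_le_of_le' tendsto_const_nhds hV ?_ ?_
    · exact hmem.mono fun β hβ => (sq_nonneg (s β))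
    · exact hmem.mono fun β hβ => hsup β hβ
  have hs0 : Tendsto s l (nhds 0) := by
    have h1 : Tendsto (fun β => Real.sqrt ((s β) ^ 2)) l (nhds 0) := by
      have := hsq0.sqrt
      simpa using this
    refine h1.congr' (hmem.mono fun β hβ => ?_)
    rw [Real.sqrt_sq (hs β hβ).1.le]
  -- Step 2 : T1 = τ / s → x1^2 + x2^2
  have hterm : ∀ x : ℝ, Tendsto (fun β => x * Real.arsinh (s β * x) / s β) l (nhds (x ^ 2)) := by
    intro x
    by_cases hx0 : x = 0
    · subst hx0
      have h0 : ∀ β, (0:ℝ) * Real.arsinh (s β * 0) / s β = 0 := fun β => by simp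
      simp only [h0]
      norm_num
    · have hmul : Tendsto (fun β => s β * x) l (nhdsWithin 0 {(0:ℝ)}ᶜ) := by
        rw [tendsto_nhdsWithin_iff]
        constructor
        · simpa using hs0.mul_const x
        · exact hmem.mono fun β hβ => by
            simp [mul_ne_zero (hs β hβ).1.ne' hx0]
      have hcomp : Tendsto (fun β => Real.arsinh (s β * x) / (s β * x)) l (nhds 1) :=
        arsinh_slope.comp hmul
      have := hcomp.const_mul (x ^ 2)
      rw [mul_one] at this
      refine this.congr' (hmem.mono fun β hβ => ?_)
      have hsne : s β ≠ 0 := (hs β hβ).1.ne'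
      field_simp
  have hT1 : Tendsto (fun β => x1 * Real.arsinh (s β * x1) / s β
      + x2 * Real.arsinh (s β * x2) / s β) l (nhds (x1 ^ 2 + x2 ^ 2)) :=
    (hterm x1).add (hterm x2)
  -- Step 3 : G → n²/2
  set G : ℝ → ℝ := fun β => x1 ^ 2 / (Real.sqrt (1 + (s β) ^ 2 * x1 ^ 2) + 1)
      + x2 ^ 2 / (Real.sqrt (1 + (s β) ^ 2 * x2 ^ 2) + 1) with hG
  have hGpos : ∀ β, betaC < β → 0 < G β := by
    intro β hβ
    have d1 : 0 < Real.sqrt (1 + (s β) ^ 2 * x1 ^ 2) + 1 := by positivity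
    have d2 : 0 < Real.sqrt (1 + (s β) ^ 2 * x2 ^ 2) + 1 := by positivity
    rcases not_and_or.mp hx with h | h
    · have : 0 < x1 ^ 2 := by positivity
      have := div_pos this d1
      have h2 : 0 ≤ x2 ^ 2 / (Real.sqrt (1 + (s β) ^ 2 * x2 ^ 2) + 1) := by positivity
      simp only [hG]; linarith
    · have : 0 < x2 ^ 2 := by positivity
      have := div_pos this d2
      have h2 : 0 ≤ x1 ^ 2 / (Real.sqrt (1 + (s β) ^ 2 * x1 ^ 2) + 1) := by positivity
      simp only [hG]; linarith
  have hGlim : Tendsto G l (nhds ((x1 ^ 2 + x2 ^ 2) / 2)) := by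
    have hd : ∀ x : ℝ, Tendsto (fun β => Real.sqrt (1 + (s β) ^ 2 * x ^ 2) + 1) l (nhds 2) := by
      intro x
      have h1 : Tendsto (fun β => 1 + (s β) ^ 2 * x ^ 2) l (nhds 1) := by
        have := (hsq0.mul_const (x ^ 2)).const_add 1
        simpa using this
      have h2 := h1.sqrt
      simp only [Real.sqrt_one] at h2
      have := h2.add_const 1
      norm_num at this ⊢
      exact this
    have h1 : Tendsto (fun β => x1 ^ 2 / (Real.sqrt (1 + (s β) ^ 2 * x1 ^ 2) + 1)) l
        (nhds (x1 ^ 2 / 2)) := tendsto_const_nhds.div (hd x1) (by norm_num)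
    have h2 : Tendsto (fun β => x2 ^ 2 / (Real.sqrt (1 + (s β) ^ 2 * x2 ^ 2) + 1)) l
        (nhds (x2 ^ 2 / 2)) := tendsto_const_nhds.div (hd x2) (by norm_num)
    have := h1.add h2
    rw [← add_div] at this
    exact this
  -- Step 4 : F → 8
  set F : ℝ → ℝ := fun β => (Real.sinh (2 * β) + 1 / Real.sinh (2 * β) - 2) / (β - betaC) ^ 2
    with hF
  have hFlim : Tendsto F l (nhds 8) := by
    have hd : HasDerivAt (fun β => Real.sinh (2 * β)) (Real.cosh (2 * betaC) * 2) betaC := by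
      simpa using ((hasDerivAt_id betaC).const_mul 2).sinh
    rw [hasDerivAt_iff_tendsto_slope] at hd
    have hsub : l ≤ nhdsWithin betaC {betaC}ᶜ :=
      nhdsWithin_mono _ (fun b hb => ne_of_gt hb)
    have hσ : Tendsto (fun β => (Real.sinh (2 * β) - 1) / (β - betaC)) l
        (nhds (Real.cosh (2 * betaC) * 2)) := by
      refine (hd.mono_left hsub).congr (fun β => ?_)
      rw [slope_def_field, sinh_two_betaC]
    have htlim : Tendsto (fun β => Real.sinh (2 * β)) l (nhds 1) := by
      have hc : ContinuousAt (fun β => Real.sinh (2 * β)) betaC := by fun_prop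
      have := hc.continuousWithinAt (s := Set.Ioi betaC)
      rw [ContinuousWithinAt, sinh_two_betaC] at this
      exact this
    have hcomb := ((hσ.mul hσ).div htlim (by norm_num))
    have hval : Real.cosh (2 * betaC) * 2 * (Real.cosh (2 * betaC) * 2) / 1 = 8 := by
      rw [cosh_two_betaC]
      have := Real.sq_sqrt (show (0:ℝ) ≤ 2 by norm_num)
      nlinarith
    rw [hval] at hcomb
    refine hcomb.congr' (hmem.mono fun β hβ => ?_)
    have htpos : 0 < Real.sinh (2 * β) := by linarith [ht1 β hβ]
    have hbne : β - betaC ≠ 0 := by linarith [hβ]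
    simp only [hF]
    exact slope_sq_identity _ _ (by linarith) (sub_ne_zero.mpr (ne_of_gt hβ))
  -- Step 5 : key identity  (s β / (β - betaC))^2 = F β / G β
  have hkey : ∀ β, betaC < β → F β / G β = (s β / (β - betaC)) ^ 2 := by
    intro β hβ
    obtain ⟨hsp, heq⟩ := hs β hβ
    have hg1 := sqrt_one_add_sub_one ((s β) ^ 2 * x1 ^ 2) (by positivity)
    have hg2 := sqrt_one_add_sub_one ((s β) ^ 2 * x2 ^ 2) (by positivity)
    have hGid : Real.sinh (2 * β) + 1 / Real.sinh (2 * β) - 2 = (s β) ^ 2 * G β := by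
      have : Real.sinh (2 * β) + 1 / Real.sinh (2 * β) - 2
          = (Real.sqrt (1 + (s β) ^ 2 * x1 ^ 2) - 1) + (Real.sqrt (1 + (s β) ^ 2 * x2 ^ 2) - 1) := by
        rw [← heq]; ring
      rw [this, hg1, hg2]
      simp only [hG]
      field_simp
    have hbpos : 0 < β - betaC := by linarith
    have hGp := hGpos β hβ
    simp only [hF, hGid]
    rw [div_pow, div_div]
    rw [mul_comm ((β - betaC) ^ 2) (G β), ← div_div]
    rw [mul_div_assoc, div_self hGp.ne', mul_one]
  -- Step 6 : T2 = s/(β−βc) → 4/n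
  have hT2 : Tendsto (fun β => s β / (β - betaC)) l (nhds (4 / n)) := by
    have hFG : Tendsto (fun β => F β / G β) l (nhds (8 / ((x1 ^ 2 + x2 ^ 2) / 2))) :=
      hFlim.div hGlim (by positivity)
    have hsqrtFG := (Real.continuous_sqrt.continuousAt).tendsto.comp hFG
    have hval : Real.sqrt (8 / ((x1 ^ 2 + x2 ^ 2) / 2)) = 4 / n := by
      have h1 : 8 / ((x1 ^ 2 + x2 ^ 2) / 2) = (4 / n) ^ 2 := by
        rw [div_pow, hnsq]; field_simp; ring
      rw [h1, Real.sqrt_sq (by positivity)]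
    rw [Function.comp_def, hval] at hsqrtFG
    refine hsqrtFG.congr' (hmem.mono fun β hβ => ?_)
    have h1 := (hs β hβ).1
    have h2 : 0 < β - betaC := sub_pos.mpr hβ
    rw [hkey β hβ, Real.sqrt_sq (by positivity)]
  -- Step 7 : combine
  have hfinal := hT1.mul hT2
  have hval : (x1 ^ 2 + x2 ^ 2) * (4 / n) = 4 * n := by
    rw [← hnsq]; field_simp
  rw [hval] at hfinal
  refine hfinal.congr' (hmem.mono fun β hβ => ?_)
  have hsne : s β ≠ 0 := (hs β hβ).1.ne'
  show (x1 * Real.arsinh (s β * x1) / s β + x2 * Real.arsinh (s β * x2) / s β)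
      * (s β / (β - betaC)) = _
  rw [← add_div, aux_cancel _ _ _ hsne]
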